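/- Let φ be a continuous complex-valued function on 𝔻̄, and suppose that for every a, b ∈ A(𝔻) and every z ∈ 𝔻, |a(z) + b(z)φ(z)| ≤ ‖a + bφ‖_𝕋. Then φ ∈ A(𝔻), i.e., φ is holomorphic in 𝔻. -/

import Mathlib

open Complex Metric Set

noncomputable def circleSup (f : ℂ → ℂ) : ℝ :=
  ⨆ ζ : sphere (0:ℂ) 1, ‖f ζ‖

def diskAlgebra : Set (ℂ → ℂ) :=
  {f | ContinuousOn f (closedBall 0 1) ∧ DifferentiableOn ℂ f (ball 0 1)}

namespace RudinAux

lemma da_const (c : ℂ) : (fun _ : ℂ => c) ∈ diskAlgebra :=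
  ⟨continuousOn_const, differentiableOn_const c⟩

lemma da_monomial (n : ℕ) : (fun w : ℂ => w ^ n) ∈ diskAlgebra :=
  ⟨(continuous_pow n).continuousOn, (differentiable_pow n).differentiableOn⟩

lemma da_linear (c : ℂ) : (fun w : ℂ => c * w) ∈ diskAlgebra :=
  ⟨(continuous_const.mul continuous_id).continuousOn,
   ((differentiable_const c).mul differentiable_id).differentiableOn⟩

lemma da_add {a b : ℂ → ℂ} (ha : a ∈ diskAlgebra) (hb : b ∈ diskAlgebra) :
    (fun w => a w + b w) ∈ diskAlgebra :=
  ⟨ha.1.add hb.1, ha.2.add hb.2⟩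

lemma da_smul (c : ℂ) {a : ℂ → ℂ} (ha : a ∈ diskAlgebra) :
    (fun w => c * a w) ∈ diskAlgebra :=
  ⟨continuousOn_const.mul ha.1, (differentiableOn_const c).mul ha.2⟩

lemma da_diffContOnCl {a : ℂ → ℂ} (ha : a ∈ diskAlgebra) :
    DiffContOnCl ℂ a (ball (0:ℂ) 1) := by
  refine ⟨ha.2, ?_⟩
  rw [closure_ball (0:ℂ) one_ne_zero]
  exact ha.1

lemma exp_mem_sphere (θ : ℝ) : Complex.exp (θ * I) ∈ sphere (0:ℂ) 1 := by
  simp [mem_sphere_zero_iff_norm, norm_exp_ofReal_mul_I]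

lemma norm_exp_eq (θ : ℝ) : ‖Complex.exp (θ * I)‖ = 1 := by
  simp [norm_exp_ofReal_mul_I]

lemma exp_ne_zero' (θ : ℝ) : Complex.exp (θ * I) ≠ 0 := Complex.exp_ne_zero _

lemma contE : Continuous fun θ : ℝ => Complex.exp (θ * I) :=
  (Complex.continuous_ofReal.mul continuous_const).cexp

lemma sub_ne_zero_of_norm {z ζ : ℂ} (hz : ‖z‖ < 1) (hζ : ‖ζ‖ = 1) : ζ - z ≠ 0 := by
  intro h
  rw [sub_eq_zero] at h
  rw [← h, hζ] at hz
  exact lt_irrefl _ hz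

lemma one_sub_ne_zero {z ζ : ℂ} (hz : ‖z‖ < 1) (hζ : ‖ζ‖ ≤ 1) :
    1 - (starRingEnd ℂ) z * ζ ≠ 0 := by
  intro h
  rw [sub_eq_zero] at h
  have : ‖(starRingEnd ℂ) z * ζ‖ = 1 := by rw [← h, norm_one]
  rw [norm_mul, RCLike.norm_conj] at this
  nlinarith [norm_nonneg z, norm_nonneg ζ]

/-- The Poisson kernel as a complex number. -/
noncomputable def K (z : ℂ) (θ : ℝ) : ℂ :=
  Complex.exp (θ * I) * (Complex.exp (θ * I) - z)⁻¹
    + (1 - (starRingEnd ℂ) z * Complex.exp (θ * I))⁻¹ - 1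

lemma contK {z : ℂ} (hz : ‖z‖ < 1) : Continuous fun θ : ℝ => K z θ := by
  apply Continuous.sub
  apply Continuous.add
  · exact contE.mul ((contE.sub continuous_const).inv₀
      fun θ => sub_ne_zero_of_norm hz (norm_exp_eq θ))
  · exact ((continuous_const.sub (continuous_const.mul contE)).inv₀
      fun θ => one_sub_ne_zero hz (norm_exp_eq θ).le)
  · exact continuous_const

lemma normK_le {z : ℂ} (hz : ‖z‖ < 1) (θ : ℝ) :
    ‖K z θ‖ ≤ 2 * (1 - ‖z‖)⁻¹ + 1 := by
  have h1 : (0:ℝ) < 1 - ‖z‖ := by linarith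
  have hζ := norm_exp_eq θ
  have e1 : ‖Complex.exp (θ * I) - z‖ ≥ 1 - ‖z‖ := by
    calc ‖Complex.exp (θ * I) - z‖ ≥ ‖Complex.exp (θ * I)‖ - ‖z‖ := norm_sub_norm_le _ _
    _ = 1 - ‖z‖ := by rw [hζ]
  have e2 : ‖1 - (starRingEnd ℂ) z * Complex.exp (θ * I)‖ ≥ 1 - ‖z‖ := by
    calc ‖(1:ℂ) - (starRingEnd ℂ) z * Complex.exp (θ * I)‖
        ≥ ‖(1:ℂ)‖ - ‖(starRingEnd ℂ) z * Complex.exp (θ * I)‖ := norm_sub_norm_le _ _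
    _ = 1 - ‖z‖ := by rw [norm_one, norm_mul, RCLike.norm_conj, hζ, mul_one]
  have b1 : ‖Complex.exp (θ * I) * (Complex.exp (θ * I) - z)⁻¹‖ ≤ (1 - ‖z‖)⁻¹ := by
    rw [norm_mul, hζ, one_mul, norm_inv]
    exact inv_anti₀ h1 e1
  have b2 : ‖(1 - (starRingEnd ℂ) z * Complex.exp (θ * I))⁻¹‖ ≤ (1 - ‖z‖)⁻¹ := by
    rw [norm_inv]
    exact inv_anti₀ h1 e2
  calc ‖K z θ‖ ≤ ‖Complex.exp (θ * I) * (Complex.exp (θ * I) - z)⁻¹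
        + (1 - (starRingEnd ℂ) z * Complex.exp (θ * I))⁻¹‖ + ‖(1:ℂ)‖ := norm_sub_le _ _
  _ ≤ (‖Complex.exp (θ * I) * (Complex.exp (θ * I) - z)⁻¹‖
        + ‖(1 - (starRingEnd ℂ) z * Complex.exp (θ * I))⁻¹‖) + 1 := by
        rw [norm_one]; gcongr; exact norm_add_le _ _
  _ ≤ ((1 - ‖z‖)⁻¹ + (1 - ‖z‖)⁻¹) + 1 := by gcongr
  _ = 2 * (1 - ‖z‖)⁻¹ + 1 := by ring

lemma conj_K {z : ℂ} (hz : ‖z‖ < 1) (θ : ℝ) : (starRingEnd ℂ) (K z θ) = K z θ := by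
  set ζ := Complex.exp (θ * I) with hζdef
  have hζ : ‖ζ‖ = 1 := norm_exp_eq θ
  have hζ0 : ζ ≠ 0 := Complex.exp_ne_zero _
  have hconjζ : (starRingEnd ℂ) ζ = ζ⁻¹ := by
    refine eq_inv_of_mul_eq_one_left ?_
    rw [mul_comm, Complex.mul_conj]
    norm_cast
    rw [Complex.normSq_eq_norm_sq, hζ]
    norm_num
  have h1 : ζ - z ≠ 0 := sub_ne_zero_of_norm hz hζ
  have h2 : (1:ℂ) - (starRingEnd ℂ) z * ζ ≠ 0 := one_sub_ne_zero hz hζ.le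
  have h3 : ζ⁻¹ - (starRingEnd ℂ) z ≠ 0 := by
    intro h
    apply h2
    have : ζ * (ζ⁻¹ - (starRingEnd ℂ) z) = 1 - (starRingEnd ℂ) z * ζ := by
      field_simp
    rw [← this, h, mul_zero]
  have h4 : (1:ℂ) - z * ζ⁻¹ ≠ 0 := by
    intro h
    apply h1
    have : ζ * (1 - z * ζ⁻¹) = ζ - z := by field_simp
    rw [← this, h, mul_zero]
  have h2' : (1:ℂ) - ζ * (starRingEnd ℂ) z ≠ 0 := by
    rw [mul_comm]; exact h2
  unfold K
  simp only [map_sub, map_add, map_mul, map_inv₀, map_one, hconjζ, Complex.conj_conj]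
  rw [← hζdef]
  simp only [hconjζ]
  field_simp
  ring

end RudinAux

namespace RudinAux2
open RudinAux

lemma exp_mem_closedBall (θ : ℝ) : Complex.exp (θ * I) ∈ closedBall (0:ℂ) 1 := by
  rw [mem_closedBall_zero_iff, norm_exp_eq]

lemma cont_comp_exp {ψ : ℂ → ℂ} (hψ : ContinuousOn ψ (closedBall (0:ℂ) 1)) :
    Continuous fun θ : ℝ => ψ (Complex.exp (θ * I)) :=
  hψ.comp_continuous contE exp_mem_closedBall

lemma circleMap_one (θ : ℝ) : circleMap 0 1 θ = Complex.exp (θ * I) := by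
  simp [circleMap]

lemma poisson_formula {a : ℂ → ℂ} (ha : a ∈ diskAlgebra) {z : ℂ} (hz : z ∈ ball (0:ℂ) 1) :
    ∫ θ in (0:ℝ)..(2*Real.pi), K z θ * a (Complex.exp (θ * I))
      = (2*Real.pi : ℂ) * a z := by
  rw [mem_ball_zero_iff] at hz
  set c := (starRingEnd ℂ) z with hc
  -- Cauchy integral formula part
  have h1 : (∮ w in C(0, 1), (w - z)⁻¹ • a w) = (2 * Real.pi * I : ℂ) • a z :=
    (da_diffContOnCl ha).circleIntegral_sub_inv_smul (by rwa [mem_ball_zero_iff])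
  have h1' : ∫ θ in (0:ℝ)..(2*Real.pi),
      I * (Complex.exp (θ * I) * (Complex.exp (θ * I) - z)⁻¹ * a (Complex.exp (θ * I)))
      = (2 * Real.pi * I : ℂ) * a z := by
    rw [smul_eq_mul] at h1
    rw [← h1]
    unfold circleIntegral
    apply intervalIntegral.integral_congr
    intro θ _
    simp only [deriv_circleMap, circleMap_one, smul_eq_mul]
    ring
  have T1 : ∫ θ in (0:ℝ)..(2*Real.pi),
      Complex.exp (θ * I) * (Complex.exp (θ * I) - z)⁻¹ * a (Complex.exp (θ * I))
      = (2 * Real.pi : ℂ) * a z := by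
    rw [intervalIntegral.integral_const_mul] at h1'
    apply mul_left_cancel₀ I_ne_zero
    rw [h1']
    ring
  -- Cauchy-Goursat part
  have hne : ∀ w ∈ closedBall (0:ℂ) 1, 1 - c * w ≠ 0 := fun w hw =>
    one_sub_ne_zero hz (mem_closedBall_zero_iff.mp hw)
  have h2 : (∮ w in C(0, 1), a w * (c * (1 - c * w)⁻¹)) = 0 := by
    apply circleIntegral_eq_zero_of_differentiable_on_off_countable zero_le_one
      Set.countable_empty
    · exact ha.1.mul (continuousOn_const.mul
        ((continuousOn_const.sub (continuousOn_const.mul (continuousOn_id))).inv₀ hne))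
    · intro w hw
      have hw' : w ∈ ball (0:ℂ) 1 := hw.1
      refine (ha.2.differentiableAt (isOpen_ball.mem_nhds hw')).mul ?_
      refine (differentiableAt_const _).mul ?_
      refine ((differentiableAt_const _).sub ((differentiableAt_const _).mul differentiableAt_id)).inv ?_
      exact hne w (ball_subset_closedBall hw')
  have h2' : ∫ θ in (0:ℝ)..(2*Real.pi),
      I * (((1 - c * Complex.exp (θ * I))⁻¹ - 1) * a (Complex.exp (θ * I))) = 0 := by
    rw [← h2]
    unfold circleIntegral
    apply intervalIntegral.integral_congr
    intro θ _
    simp only [deriv_circleMap, circleMap_one, smul_eq_mul]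
    have hx : (1:ℂ) - c * Complex.exp (θ * I) ≠ 0 := hne _ (exp_mem_closedBall θ)
    linear_combination (I * a (Complex.exp (θ * I))) * mul_inv_cancel₀ hx
  have T2 : ∫ θ in (0:ℝ)..(2*Real.pi),
      ((1 - c * Complex.exp (θ * I))⁻¹ - 1) * a (Complex.exp (θ * I)) = 0 := by
    rw [intervalIntegral.integral_const_mul] at h2'
    rcases mul_eq_zero.mp h2' with h | h
    · exact absurd h I_ne_zero
    · exact h
  -- combine
  have hint1 : IntervalIntegrable (fun θ : ℝ =>
      Complex.exp (θ * I) * (Complex.exp (θ * I) - z)⁻¹ * a (Complex.exp (θ * I)))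
      MeasureTheory.volume 0 (2*Real.pi) := by
    apply Continuous.intervalIntegrable
    exact ((contE.mul ((contE.sub continuous_const).inv₀
      (fun θ => sub_ne_zero_of_norm hz (norm_exp_eq θ)))).mul (cont_comp_exp ha.1))
  have hint2 : IntervalIntegrable (fun θ : ℝ =>
      ((1 - c * Complex.exp (θ * I))⁻¹ - 1) * a (Complex.exp (θ * I)))
      MeasureTheory.volume 0 (2*Real.pi) := by
    apply Continuous.intervalIntegrable
    exact ((((continuous_const.sub (continuous_const.mul contE)).inv₀
      (fun θ => hne _ (exp_mem_closedBall θ))).sub continuous_const).mul (cont_comp_exp ha.1))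
  calc ∫ θ in (0:ℝ)..(2*Real.pi), K z θ * a (Complex.exp (θ * I))
      = ∫ θ in (0:ℝ)..(2*Real.pi),
        (Complex.exp (θ * I) * (Complex.exp (θ * I) - z)⁻¹ * a (Complex.exp (θ * I))
          + ((1 - c * Complex.exp (θ * I))⁻¹ - 1) * a (Complex.exp (θ * I))) := by
        apply intervalIntegral.integral_congr
        intro θ _
        unfold K
        rw [← hc]
        ring
  _ = (2 * Real.pi : ℂ) * a z + 0 := by
        rw [intervalIntegral.integral_add hint1 hint2, T1, T2]
  _ = (2 * Real.pi : ℂ) * a z := by ring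

end RudinAux2

namespace RudinAux3
open RudinAux RudinAux2

/-- restriction of a function to the circle -/
noncomputable def rest (f : ℂ → ℂ) (hf : ContinuousOn f (closedBall (0:ℂ) 1)) :
    C(sphere (0:ℂ) 1, ℂ) :=
  ⟨fun ζ => f ζ, hf.comp_continuous continuous_subtype_val
    (fun x => sphere_subset_closedBall x.2)⟩

@[simp] lemma rest_apply (f : ℂ → ℂ) (hf) (x : sphere (0:ℂ) 1) :
    rest f hf x = f x := rfl

lemma circleSup_eq (f : ℂ → ℂ) (hf : ContinuousOn f (closedBall (0:ℂ) 1)) :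
    circleSup f = ‖rest f hf‖ := by
  rw [ContinuousMap.norm_eq_iSup_norm]
  unfold circleSup
  congr 1

/-- the disk algebra as a submodule of `ℂ → ℂ` -/
noncomputable def DAsub : Submodule ℂ (ℂ → ℂ) where
  carrier := diskAlgebra
  add_mem' := fun ha hb => da_add ha hb
  zero_mem' := da_const 0
  smul_mem' := fun c _ ha => da_smul c ha

lemma exists_state (ψ : ℂ → ℂ) (hψ : ContinuousOn ψ (closedBall (0:ℂ) 1))
    (hyp : ∀ a ∈ diskAlgebra, ∀ c : ℂ, ∀ w ∈ ball (0:ℂ) 1,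
      ‖a w + c * ψ w‖ ≤ circleSup (fun ζ => a ζ + c * ψ ζ))
    {z : ℂ} (hz : z ∈ ball (0:ℂ) 1) :
    ∃ ℓ : C(sphere (0:ℂ) 1, ℂ) →L[ℂ] ℂ, ‖ℓ‖ ≤ 1 ∧
      (∀ (a : ℂ → ℂ) (ha : a ∈ diskAlgebra), ℓ (rest a ha.1) = a z) ∧
      ℓ (rest ψ hψ) = ψ z := by
  classical
  -- the linear map (a, c) ↦ a|𝕋 + c ψ|𝕋
  let T : (DAsub × ℂ) →ₗ[ℂ] C(sphere (0:ℂ) 1, ℂ) :=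
    { toFun := fun p => rest (p.1 : ℂ → ℂ) p.1.2.1 + p.2 • rest ψ hψ
      map_add' := by
        intro p q
        ext x
        simp [rest, add_smul]
        ring
      map_smul' := by
        intro c p
        ext x
        simp [rest, smul_smul] }
  let S : (DAsub × ℂ) →ₗ[ℂ] ℂ :=
    { toFun := fun p => (p.1 : ℂ → ℂ) z + p.2 * ψ z
      map_add' := by intro p q; simp; ring
      map_smul' := by intro c p; simp; ring }
  have key : ∀ p : DAsub × ℂ, ‖S p‖ ≤ ‖T p‖ := by
    intro p
    have h1 : ‖S p‖ = ‖(p.1 : ℂ → ℂ) z + p.2 * ψ z‖ := rfl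
    have ha : (p.1 : ℂ → ℂ) ∈ diskAlgebra := p.1.2
    have h2 := hyp (p.1 : ℂ → ℂ) ha p.2 z hz
    have hcont : ContinuousOn (fun ζ => (p.1 : ℂ → ℂ) ζ + p.2 * ψ ζ) (closedBall (0:ℂ) 1) :=
      ha.1.add (continuousOn_const.mul hψ)
    have h3 : circleSup (fun ζ => (p.1 : ℂ → ℂ) ζ + p.2 * ψ ζ) = ‖T p‖ := by
      rw [circleSup_eq _ hcont]
      congr 1
    rw [h1, ← h3]
    exact h2
  have hker : LinearMap.ker T ≤ LinearMap.ker S := by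
    intro p hp
    rw [LinearMap.mem_ker] at hp ⊢
    have := key p
    rw [hp, norm_zero] at this
    exact norm_le_zero_iff.mp this
  let Λ : (LinearMap.range T) →ₗ[ℂ] ℂ :=
    (Submodule.liftQ (LinearMap.ker T) S hker).comp
      (LinearMap.quotKerEquivRange T).symm.toLinearMap
  have hΛ : ∀ p : DAsub × ℂ, Λ ⟨T p, LinearMap.mem_range_self T p⟩ = S p := by
    intro p
    show (Submodule.liftQ (LinearMap.ker T) S hker)
      ((LinearMap.quotKerEquivRange T).symm ⟨T p, LinearMap.mem_range_self T p⟩) = S p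
    have : (LinearMap.quotKerEquivRange T).symm ⟨T p, LinearMap.mem_range_self T p⟩
        = Submodule.Quotient.mk p := by
      rw [LinearEquiv.symm_apply_eq]
      exact Subtype.ext (T.quotKerEquivRange_apply_mk p).symm
    rw [this, Submodule.liftQ_apply]
  have hΛb : ∀ u : LinearMap.range T, ‖Λ u‖ ≤ 1 * ‖u‖ := by
    rintro ⟨u, hu⟩
    obtain ⟨p, rfl⟩ := hu
    rw [hΛ p, one_mul]
    exact key p
  let Λc : (LinearMap.range T : Submodule ℂ C(sphere (0:ℂ) 1, ℂ)) →L[ℂ] ℂ :=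
    Λ.mkContinuous 1 hΛb
  obtain ⟨ℓ, hext, hnorm⟩ := exists_extension_norm_eq (LinearMap.range T) Λc
  have hℓ1 : ‖ℓ‖ ≤ 1 := by
    rw [hnorm]
    exact Λ.mkContinuous_norm_le zero_le_one hΛb
  have hrest : ∀ (a : ℂ → ℂ) (ha : a ∈ diskAlgebra), ℓ (rest a ha.1) = a z := by
    intro a ha
    have hmem : rest a ha.1 = T (⟨⟨a, ha⟩, 0⟩ : DAsub × ℂ) := by
      ext x
      simp [T, rest]
    have := hext ⟨T (⟨⟨a, ha⟩, 0⟩ : DAsub × ℂ), LinearMap.mem_range_self T _⟩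
    rw [hmem]
    rw [show ((⟨T (⟨⟨a, ha⟩, 0⟩ : DAsub × ℂ), LinearMap.mem_range_self T _⟩ :
      LinearMap.range T) : C(sphere (0:ℂ) 1, ℂ)) = T (⟨⟨a, ha⟩, 0⟩ : DAsub × ℂ) from rfl] at this
    rw [this]
    show Λ _ = _
    rw [hΛ]
    simp [S]
  have hpsi : ℓ (rest ψ hψ) = ψ z := by
    have hmem : rest ψ hψ = T ((0, 1) : DAsub × ℂ) := by
      ext x
      simp [T, rest]
    have := hext ⟨T ((0,1) : DAsub × ℂ), LinearMap.mem_range_self T _⟩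
    rw [hmem]
    rw [show ((⟨T ((0,1) : DAsub × ℂ), LinearMap.mem_range_self T _⟩ :
      LinearMap.range T) : C(sphere (0:ℂ) 1, ℂ)) = T ((0,1) : DAsub × ℂ) from rfl] at this
    rw [this]
    show Λ _ = _
    rw [hΛ]
    simp [S]
  exact ⟨ℓ, hℓ1, hrest, hpsi⟩

end RudinAux3

namespace RudinAux4
open RudinAux RudinAux2 RudinAux3

lemma conj_eq_inv {ζ : ℂ} (hζ : ‖ζ‖ = 1) : (starRingEnd ℂ) ζ = ζ⁻¹ := by
  refine eq_inv_of_mul_eq_one_left ?_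
  rw [mul_comm, Complex.mul_conj]
  norm_cast
  rw [Complex.normSq_eq_norm_sq, hζ]
  norm_num

lemma state_im_eq_zero {ℓ : C(sphere (0:ℂ) 1, ℂ) →L[ℂ] ℂ} (hn : ‖ℓ‖ ≤ 1) (h1 : ℓ 1 = 1)
    {u : C(sphere (0:ℂ) 1, ℂ)} (hu : ∀ x, (u x).im = 0) : (ℓ u).im = 0 := by
  set t := (ℓ u).im with ht
  have key : ∀ r : ℝ, t^2 + 2*t*r ≤ ‖u‖^2 := by
    intro r
    have e1 : ℓ (u + ((r:ℂ)*I) • 1) = ℓ u + (r:ℂ)*I := by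
      rw [map_add, map_smul, h1, smul_eq_mul, mul_one]
    have e2 : ‖ℓ (u + ((r:ℂ)*I) • 1)‖ ≤ ‖u + ((r:ℂ)*I) • 1‖ := by
      calc ‖ℓ (u + ((r:ℂ)*I) • 1)‖ ≤ ‖ℓ‖ * ‖u + ((r:ℂ)*I) • 1‖ := ℓ.le_opNorm _
      _ ≤ 1 * ‖u + ((r:ℂ)*I) • 1‖ := by
          exact mul_le_mul_of_nonneg_right hn (norm_nonneg _)
      _ = ‖u + ((r:ℂ)*I) • 1‖ := one_mul _
    have e3 : ‖u + ((r:ℂ)*I) • 1‖^2 ≤ ‖u‖^2 + r^2 := by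
      have hb : ‖u + ((r:ℂ)*I) • 1‖ ≤ Real.sqrt (‖u‖^2 + r^2) := by
        rw [ContinuousMap.norm_le _ (Real.sqrt_nonneg _)]
        intro x
        have hx : ((u + ((r:ℂ)*I) • 1) x) = u x + (r:ℂ)*I := by
          simp
        rw [hx]
        have him : (u x + (r:ℂ)*I).im = r := by
          simp [hu x]
        have hre : (u x + (r:ℂ)*I).re = (u x).re := by simp
        have hnormsq : ‖u x + (r:ℂ)*I‖^2 = (u x).re^2 + r^2 := by
          rw [← Complex.normSq_eq_norm_sq, Complex.normSq_apply, hre, him]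
          ring
        have hre2 : (u x).re^2 ≤ ‖u‖^2 := by
          have h1' : |(u x).re| ≤ ‖u x‖ := Complex.abs_re_le_norm (u x)
          have h2' : ‖u x‖ ≤ ‖u‖ := u.norm_coe_le_norm x
          calc (u x).re^2 = |(u x).re|^2 := (_root_.sq_abs _).symm
          _ ≤ ‖u‖^2 := by
            apply pow_le_pow_left₀ (abs_nonneg _) (h1'.trans h2')
        rw [show Real.sqrt (‖u‖^2 + r^2) = Real.sqrt (‖u‖^2 + r^2) from rfl]
        have : ‖u x + (r:ℂ)*I‖^2 ≤ ‖u‖^2 + r^2 := by rw [hnormsq]; linarith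
        nlinarith [norm_nonneg (u x + (r:ℂ)*I), Real.sq_sqrt (by positivity : (0:ℝ) ≤ ‖u‖^2 + r^2),
          Real.sqrt_nonneg (‖u‖^2 + r^2)]
      have := Real.sq_sqrt (by positivity : (0:ℝ) ≤ ‖u‖^2 + r^2)
      nlinarith [norm_nonneg (u + ((r:ℂ)*I) • 1), Real.sqrt_nonneg (‖u‖^2 + r^2)]
    have e4 : (t + r)^2 ≤ ‖ℓ (u + ((r:ℂ)*I) • 1)‖^2 := by
      rw [e1]
      have him : (ℓ u + (r:ℂ)*I).im = t + r := by simp [ht]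
      have h5 := Complex.abs_im_le_norm (ℓ u + (r:ℂ)*I)
      rw [him] at h5
      calc (t + r)^2 = |t + r|^2 := (_root_.sq_abs _).symm
      _ ≤ ‖ℓ u + (r:ℂ)*I‖^2 := by
        apply pow_le_pow_left₀ (abs_nonneg _) h5
    nlinarith [e2, norm_nonneg (ℓ (u + ((r:ℂ)*I) • 1)), norm_nonneg (u + ((r:ℂ)*I) • 1)]
  by_contra hne
  have h2t : 2*t ≠ 0 := by
    intro h; apply hne; linarith [(mul_eq_zero.mp h).resolve_left (two_ne_zero)]
  have := key ((‖u‖^2 + 1 - t^2)/(2*t))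
  rw [mul_comm (2*t) _] at this
  rw [div_mul_cancel₀ _ h2t] at this
  · linarith
  
/-- the characters ζ ↦ ζ^k on the circle -/
noncomputable def χ (k : ℤ) : C(sphere (0:ℂ) 1, ℂ) :=
  ⟨fun ζ => (ζ : ℂ) ^ k, by
    refine continuous_subtype_val.zpow₀ k fun x => Or.inl ?_
    intro h0
    have := mem_sphere_zero_iff_norm.mp x.2
    rw [h0] at this
    simp at this⟩

@[simp] lemma χ_apply (k : ℤ) (x : sphere (0:ℂ) 1) : χ k x = (x : ℂ) ^ k := rfl

lemma sphere_val_ne_zero (x : sphere (0:ℂ) 1) : (x : ℂ) ≠ 0 := by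
  intro h0
  have := mem_sphere_zero_iff_norm.mp x.2
  rw [h0] at this
  simp at this

lemma sphere_norm_one (x : sphere (0:ℂ) 1) : ‖(x:ℂ)‖ = 1 :=
  mem_sphere_zero_iff_norm.mp x.2

lemma χ_mul (j k : ℤ) : χ j * χ k = χ (j + k) := by
  ext x
  simp [zpow_add₀ (sphere_val_ne_zero x)]

lemma χ_zero : χ 0 = 1 := by ext x; simp

lemma star_χ (k : ℤ) : star (χ k) = χ (-k) := by
  ext x
  simp only [ContinuousMap.star_apply, χ_apply]
  rw [show (star ((x:ℂ)^k)) = (starRingEnd ℂ) ((x:ℂ)^k) from rfl]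
  rw [map_zpow₀, conj_eq_inv (sphere_norm_one x), ← zpow_neg_one, ← zpow_mul]
  ring_nf

lemma span_chi_mul {u v : C(sphere (0:ℂ) 1, ℂ)}
    (hu : u ∈ Submodule.span ℂ (Set.range χ)) (hv : v ∈ Submodule.span ℂ (Set.range χ)) :
    u * v ∈ Submodule.span ℂ (Set.range χ) := by
  induction hu using Submodule.span_induction with
  | mem x hx =>
    obtain ⟨j, rfl⟩ := hx
    induction hv using Submodule.span_induction with
    | mem y hy =>
      obtain ⟨k, rfl⟩ := hy
      rw [χ_mul]
      exact Submodule.subset_span ⟨j + k, rfl⟩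
    | zero => rw [mul_zero]; exact Submodule.zero_mem _
    | add y z _ _ hy hz => rw [mul_add]; exact Submodule.add_mem _ hy hz
    | smul c y _ hy => rw [mul_smul_comm]; exact Submodule.smul_mem _ c hy
  | zero => rw [zero_mul]; exact Submodule.zero_mem _
  | add x y _ _ hx hy => rw [add_mul]; exact Submodule.add_mem _ hx hy
  | smul c x _ hx => rw [smul_mul_assoc]; exact Submodule.smul_mem _ c hx

lemma span_chi_star {u : C(sphere (0:ℂ) 1, ℂ)}
    (hu : u ∈ Submodule.span ℂ (Set.range χ)) :
    star u ∈ Submodule.span ℂ (Set.range χ) := by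
  induction hu using Submodule.span_induction with
  | mem x hx =>
    obtain ⟨k, rfl⟩ := hx
    rw [star_χ]
    exact Submodule.subset_span ⟨-k, rfl⟩
  | zero => rw [star_zero]; exact Submodule.zero_mem _
  | add x y _ _ hx hy => rw [star_add]; exact Submodule.add_mem _ hx hy
  | smul c x _ hx =>
    rw [star_smul]
    exact Submodule.smul_mem _ _ hx

lemma dense_span_chi (u : C(sphere (0:ℂ) 1, ℂ)) :
    u ∈ closure (Submodule.span ℂ (Set.range χ) : Set C(sphere (0:ℂ) 1, ℂ)) := by
  have hsep : (StarAlgebra.adjoin ℂ ({χ 1} : Set C(sphere (0:ℂ) 1, ℂ))).SeparatesPoints := by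
    intro x y hxy
    refine ⟨χ 1, ⟨χ 1, StarAlgebra.subset_adjoin ℂ _ rfl, rfl⟩, ?_⟩
    simp only [χ_apply, zpow_one]
    exact fun h => hxy (Subtype.ext h)
  have htop := ContinuousMap.starSubalgebra_topologicalClosure_eq_top_of_separatesPoints
    (StarAlgebra.adjoin ℂ ({χ 1} : Set C(sphere (0:ℂ) 1, ℂ))) hsep
  have hmem : u ∈ (StarAlgebra.adjoin ℂ ({χ 1} : Set C(sphere (0:ℂ) 1, ℂ))).topologicalClosure := by
    rw [htop]; trivial
  have hsub : (StarAlgebra.adjoin ℂ ({χ 1} : Set C(sphere (0:ℂ) 1, ℂ)) : Set C(sphere (0:ℂ) 1, ℂ))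
      ⊆ (Submodule.span ℂ (Set.range χ) : Set C(sphere (0:ℂ) 1, ℂ)) := by
    intro x hx
    induction hx using StarAlgebra.adjoin_induction with
    | mem y hy =>
      rw [Set.mem_singleton_iff] at hy
      subst hy
      exact Submodule.subset_span ⟨1, rfl⟩
    | algebraMap r =>
      rw [Algebra.algebraMap_eq_smul_one, ← χ_zero]
      exact Submodule.smul_mem _ _ (Submodule.subset_span ⟨0, rfl⟩)
    | add y z _ _ hy hz => exact Submodule.add_mem _ hy hz
    | mul y z _ _ hy hz => exact span_chi_mul hy hz
    | star y _ hy => exact span_chi_star hy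
  exact closure_mono hsub hmem

lemma intervalIntegral_conj {f : ℝ → ℂ} {a b : ℝ} :
    ∫ θ in a..b, (starRingEnd ℂ) (f θ) = (starRingEnd ℂ) (∫ θ in a..b, f θ) := by
  rw [intervalIntegral.intervalIntegral_eq_integral_uIoc,
      intervalIntegral.intervalIntegral_eq_integral_uIoc, _root_.integral_conj]
  split_ifs <;> simp [Complex.real_smul]

end RudinAux4

namespace RudinAux5
open RudinAux RudinAux2 RudinAux3 RudinAux4

lemma two_pi_ne : ((2*Real.pi : ℝ) : ℂ) ≠ 0 := by
  simp [Real.pi_ne_zero]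

lemma poisson_rep (ψ : ℂ → ℂ) (hψ : ContinuousOn ψ (closedBall (0:ℂ) 1))
    (hyp : ∀ a ∈ diskAlgebra, ∀ c : ℂ, ∀ w ∈ ball (0:ℂ) 1,
      ‖a w + c * ψ w‖ ≤ circleSup (fun ζ => a ζ + c * ψ ζ))
    {z : ℂ} (hz : z ∈ ball (0:ℂ) 1) :
    ((2*Real.pi : ℝ) : ℂ) * ψ z
      = ∫ θ in (0:ℝ)..(2*Real.pi), K z θ * ψ (Complex.exp (θ*I)) := by
  obtain ⟨ℓ, hn, hrest, hψz⟩ := exists_state ψ hψ hyp hz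
  have hznorm : ‖z‖ < 1 := mem_ball_zero_iff.mp hz
  have hone : (1 : C(sphere (0:ℂ) 1, ℂ)) = rest (fun _ => 1) (da_const 1).1 := by
    ext x; simp
  have hℓ1 : ℓ 1 = 1 := by rw [hone, hrest (fun _ => 1) (da_const 1)]
  have hi : ∀ u : C(sphere (0:ℂ) 1, ℂ), IntervalIntegrable
      (fun θ : ℝ => K z θ * u ⟨Complex.exp (θ*I), exp_mem_sphere θ⟩)
      MeasureTheory.volume 0 (2*Real.pi) := by
    intro u
    apply Continuous.intervalIntegrable
    exact (contK hznorm).mul (u.continuous.comp (Continuous.subtype_mk contE _))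
  set M : ℝ := 2 * (1 - ‖z‖)⁻¹ + 1 with hM
  have hM0 : 0 ≤ M := by
    have : (0:ℝ) < 1 - ‖z‖ := by linarith
    positivity
  let Pl : C(sphere (0:ℂ) 1, ℂ) →ₗ[ℂ] ℂ :=
    { toFun := fun u => ∫ θ in (0:ℝ)..(2*Real.pi), K z θ * u ⟨Complex.exp (θ*I), exp_mem_sphere θ⟩
      map_add' := by
        intro u v
        simp only [ContinuousMap.add_apply]
        rw [← intervalIntegral.integral_add (hi u) (hi v)]
        congr 1
        funext θ
        ring
      map_smul' := by
        intro c u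
        simp only [ContinuousMap.smul_apply, smul_eq_mul, RingHom.id_apply]
        rw [← intervalIntegral.integral_const_mul]
        congr 1
        funext θ
        ring }
  have hPl : ∀ u, ‖Pl u‖ ≤ (M * (2*Real.pi)) * ‖u‖ := by
    intro u
    have hb : ∀ θ ∈ Set.uIoc (0:ℝ) (2*Real.pi),
        ‖K z θ * u ⟨Complex.exp (θ*I), exp_mem_sphere θ⟩‖ ≤ M * ‖u‖ := by
      intro θ _
      rw [norm_mul]
      exact mul_le_mul (normK_le hznorm θ) (u.norm_coe_le_norm _) (norm_nonneg _) hM0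
    have := intervalIntegral.norm_integral_le_of_norm_le_const hb
    have hpi : |2*Real.pi - 0| = 2*Real.pi := by
      rw [sub_zero]
      exact abs_of_nonneg (by positivity)
    rw [hpi] at this
    calc ‖Pl u‖ ≤ (M * ‖u‖) * (2*Real.pi) := this
    _ = (M * (2*Real.pi)) * ‖u‖ := by ring
  let Pc : C(sphere (0:ℂ) 1, ℂ) →L[ℂ] ℂ := Pl.mkContinuous (M * (2*Real.pi)) hPl
  have hPc : ∀ u, Pc u = Pl u := fun u => rfl
  let D : C(sphere (0:ℂ) 1, ℂ) →L[ℂ] ℂ := ℓ - (((2*Real.pi:ℝ) : ℂ))⁻¹ • Pc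
  -- values on characters
  have hℓnat : ∀ n : ℕ, ℓ (χ (n:ℤ)) = z ^ n := by
    intro n
    have : χ (n:ℤ) = rest (fun w => w^n) (da_monomial n).1 := by
      ext x
      simp [zpow_natCast]
    rw [this, hrest _ (da_monomial n)]
  have hPnat : ∀ n : ℕ, Pl (χ (n:ℤ)) = ((2*Real.pi:ℝ) : ℂ) * z ^ n := by
    intro n
    have h1 : Pl (χ (n:ℤ)) = ∫ θ in (0:ℝ)..(2*Real.pi),
        K z θ * (fun w : ℂ => w ^ n) (Complex.exp (θ*I)) := by
      show (∫ θ in (0:ℝ)..(2*Real.pi), _) = _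
      congr 1
    rw [h1, RudinAux2.poisson_formula (da_monomial n) hz]
    norm_cast
  have hPneg : ∀ n : ℕ, Pl (χ (-(n:ℤ))) = ((2*Real.pi:ℝ) : ℂ) * (starRingEnd ℂ) (z ^ n) := by
    intro n
    have h1 : Pl (χ (-(n:ℤ))) = ∫ θ in (0:ℝ)..(2*Real.pi),
        (starRingEnd ℂ) (K z θ * (Complex.exp (θ*I)) ^ (n:ℤ)) := by
      show (∫ θ in (0:ℝ)..(2*Real.pi), _) = _
      congr 1
      funext θ
      rw [map_mul, conj_K hznorm, map_zpow₀, conj_eq_inv (norm_exp_eq θ), inv_zpow, ← zpow_neg]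
      simp
    rw [h1, intervalIntegral_conj]
    have h2 : (∫ θ in (0:ℝ)..(2*Real.pi), K z θ * (Complex.exp (θ*I)) ^ (n:ℤ))
        = ((2*Real.pi:ℝ) : ℂ) * z ^ n := by
      have h3 : (∫ θ in (0:ℝ)..(2*Real.pi), K z θ * (Complex.exp (θ*I)) ^ (n:ℤ))
          = ∫ θ in (0:ℝ)..(2*Real.pi), K z θ * (fun w : ℂ => w ^ n) (Complex.exp (θ*I)) := by
        congr 1
      rw [h3, RudinAux2.poisson_formula (da_monomial n) hz]
      norm_cast
    rw [h2, map_mul, Complex.conj_ofReal]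
  have hℓneg : ∀ n : ℕ, ℓ (χ (-(n:ℤ))) = (starRingEnd ℂ) (z ^ n) := by
    intro n
    set p := ℓ (χ (-(n:ℤ))) with hp
    set w : ℂ := z ^ n with hw
    have hxconj : ∀ x : sphere (0:ℂ) 1, (x:ℂ) ^ (-(n:ℤ)) = (starRingEnd ℂ) ((x:ℂ) ^ (n:ℤ)) := by
      intro x
      rw [map_zpow₀, conj_eq_inv (sphere_norm_one x), inv_zpow, ← zpow_neg]
    have hu : ∀ x : sphere (0:ℂ) 1, ((χ (n:ℤ) + χ (-(n:ℤ))) x).im = 0 := by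
      intro x
      simp only [ContinuousMap.add_apply, χ_apply, hxconj x, Complex.add_im, Complex.conj_im]
      ring
    have hv : ∀ x : sphere (0:ℂ) 1, ((I • (χ (-(n:ℤ)) - χ (n:ℤ))) x).im = 0 := by
      intro x
      simp only [ContinuousMap.smul_apply, ContinuousMap.sub_apply, χ_apply, hxconj x,
        smul_eq_mul, Complex.mul_im, Complex.I_re, Complex.I_im, Complex.sub_re,
        Complex.sub_im, Complex.conj_re, Complex.conj_im]
      ring
    have h1 := state_im_eq_zero hn hℓ1 hu
    have h2 := state_im_eq_zero hn hℓ1 hv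
    rw [map_add, hℓnat n] at h1
    rw [map_smul, map_sub, hℓnat n, smul_eq_mul] at h2
    rw [show ℓ (χ (-(n:ℤ))) = p from rfl] at h1 h2
    have h1' : w.im + p.im = 0 := by
      simpa [Complex.add_im] using h1
    have h2' : p.re - w.re = 0 := by
      simpa [Complex.mul_im, Complex.I_re, Complex.I_im, Complex.sub_re] using h2
    apply Complex.ext
    · simp only [Complex.conj_re]
      linarith
    · simp only [Complex.conj_im]
      linarith
  have hDχ : ∀ k : ℤ, D (χ k) = 0 := by
    intro k
    rcases k.eq_nat_or_neg with ⟨n, rfl | rfl⟩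
    · show ℓ (χ (n:ℤ)) - (((2*Real.pi:ℝ) : ℂ))⁻¹ • Pc (χ (n:ℤ)) = 0
      rw [hPc, hℓnat n, hPnat n, smul_eq_mul, inv_mul_cancel_left₀ two_pi_ne, sub_self]
    · show ℓ (χ (-(n:ℤ))) - (((2*Real.pi:ℝ) : ℂ))⁻¹ • Pc (χ (-(n:ℤ))) = 0
      rw [hPc, hℓneg n, hPneg n, smul_eq_mul, inv_mul_cancel_left₀ two_pi_ne, sub_self]
  have hker : ∀ u ∈ Submodule.span ℂ (Set.range χ), D u = 0 := by
    intro u hu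
    induction hu using Submodule.span_induction with
    | mem x hx => obtain ⟨k, rfl⟩ := hx; exact hDχ k
    | zero => exact map_zero D
    | add x y _ _ hx hy => rw [map_add, hx, hy, add_zero]
    | smul c x _ hx => rw [map_smul, hx, smul_zero]
  have hcl : IsClosed {u : C(sphere (0:ℂ) 1, ℂ) | D u = 0} :=
    isClosed_eq D.continuous continuous_const
  have hDψ : D (rest ψ hψ) = 0 :=
    closure_minimal (fun u hu => hker u hu) hcl (dense_span_chi (rest ψ hψ))
  have hfin : ℓ (rest ψ hψ) = (((2*Real.pi:ℝ) : ℂ))⁻¹ * Pl (rest ψ hψ) := by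
    have : ℓ (rest ψ hψ) - (((2*Real.pi:ℝ) : ℂ))⁻¹ • Pc (rest ψ hψ) = 0 := hDψ
    rw [sub_eq_zero] at this
    rw [this, hPc, smul_eq_mul]
  rw [hψz] at hfin
  have hPlψ : Pl (rest ψ hψ) = ∫ θ in (0:ℝ)..(2*Real.pi), K z θ * ψ (Complex.exp (θ*I)) := rfl
  rw [hPlψ] at hfin
  rw [hfin, mul_inv_cancel_left₀ two_pi_ne]

end RudinAux5

namespace RudinAux6
open RudinAux RudinAux2 RudinAux3 RudinAux4 RudinAux5 MeasureTheory

set_option maxHeartbeats 1000000 in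
lemma diff_param {g E : ℝ → ℂ} (hg : Continuous g) (hE : Continuous E)
    (hEn : ∀ θ, ‖E θ‖ = 1) :
    DifferentiableOn ℂ (fun z => ∫ θ in (0:ℝ)..(2*Real.pi), g θ * (E θ - z)⁻¹)
      (ball (0:ℂ) 1) := by
  intro z₀ hz₀
  apply DifferentiableAt.differentiableWithinAt
  have hz₀' : ‖z₀‖ < 1 := mem_ball_zero_iff.mp hz₀
  set ε : ℝ := (1 - ‖z₀‖)/2 with hε
  have hε0 : 0 < ε := by rw [hε]; linarith
  have hlow : ∀ z ∈ ball z₀ ε, ∀ θ : ℝ, ε ≤ ‖E θ - z‖ := by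
    intro z hzb θ
    have h1 : ‖z - z₀‖ < ε := mem_ball_iff_norm.mp hzb
    have h2 : ‖z‖ ≤ ‖z₀‖ + ε := by
      calc ‖z‖ = ‖z₀ + (z - z₀)‖ := by congr 1; ring
      _ ≤ ‖z₀‖ + ‖z - z₀‖ := norm_add_le _ _
      _ ≤ ‖z₀‖ + ε := by linarith
    calc ε = 1 - (‖z₀‖ + ε) := by rw [hε]; ring
    _ ≤ ‖E θ‖ - ‖z‖ := by rw [hEn θ]; linarith
    _ ≤ ‖E θ - z‖ := norm_sub_norm_le _ _
  have hne : ∀ z ∈ ball z₀ ε, ∀ θ : ℝ, E θ - z ≠ 0 := by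
    intro z hzb θ h
    have := hlow z hzb θ
    rw [h, norm_zero] at this
    linarith
  have hmeas : ∀ z : ℂ, AEStronglyMeasurable (fun θ => g θ * (E θ - z)⁻¹)
      (volume.restrict (Set.uIoc (0:ℝ) (2*Real.pi))) := fun z =>
    ((hg.measurable.mul ((hE.measurable.sub measurable_const).inv)).aestronglyMeasurable)
  have hmeas' : AEStronglyMeasurable (fun θ => g θ * ((E θ - z₀)⁻¹)^2)
      (volume.restrict (Set.uIoc (0:ℝ) (2*Real.pi))) :=
    ((hg.measurable.mul (((hE.measurable.sub measurable_const).inv).pow_const 2)).aestronglyMeasurable)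
  have hbound : ∀ᵐ θ ∂(volume : Measure ℝ), θ ∈ Set.uIoc (0:ℝ) (2*Real.pi) →
      ∀ z ∈ ball z₀ ε, ‖g θ * ((E θ - z)⁻¹)^2‖ ≤ ‖g θ‖ * (ε⁻¹)^2 := by
    apply ae_of_all
    intro θ _ z hzb
    rw [norm_mul, norm_pow, norm_inv]
    have h3 : ‖E θ - z‖⁻¹ ≤ ε⁻¹ := inv_anti₀ hε0 (hlow z hzb θ)
    exact mul_le_mul_of_nonneg_left
      (pow_le_pow_left₀ (inv_nonneg.mpr (norm_nonneg _)) h3 2) (norm_nonneg _)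
  have hdiff : ∀ᵐ θ ∂(volume : Measure ℝ), θ ∈ Set.uIoc (0:ℝ) (2*Real.pi) →
      ∀ z ∈ ball z₀ ε, HasDerivAt (fun w => g θ * (E θ - w)⁻¹) (g θ * ((E θ - z)⁻¹)^2) z := by
    apply ae_of_all
    intro θ _ z hzb
    have h0 : HasDerivAt (fun w : ℂ => E θ - w) (-1) z := (hasDerivAt_id z).const_sub (E θ)
    have h1 := h0.inv (hne z hzb θ)
    have h2 : -(-1 : ℂ) / (E θ - z)^2 = ((E θ - z)⁻¹)^2 := by
      rw [neg_neg, inv_pow]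
      exact one_div _
    rw [h2] at h1
    exact h1.const_mul (g θ)
  have key := intervalIntegral.hasDerivAt_integral_of_dominated_loc_of_deriv_le
    (F := fun z θ => g θ * (E θ - z)⁻¹) (F' := fun z θ => g θ * ((E θ - z)⁻¹)^2)
    (x₀ := z₀) (a := 0) (b := 2*Real.pi) (μ := volume)
    (bound := fun θ => ‖g θ‖ * (ε⁻¹)^2) (ball_mem_nhds z₀ hε0)
    (Filter.Eventually.of_forall hmeas)
    (Continuous.intervalIntegrable
      (hg.mul ((hE.sub continuous_const).inv₀ (hne z₀ (mem_ball_self hε0)))) 0 (2*Real.pi))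
    hmeas' hbound
    (Continuous.intervalIntegrable (hg.norm.mul continuous_const) 0 (2*Real.pi))
    hdiff
  exact key.2.differentiableAt

lemma two_I_ne : (2 * I : ℂ) ≠ 0 := by
  simp [I_ne_zero]

lemma wirt {A B R : ℂ → ℂ} {z₀ a' b' r : ℂ}
    (hA : HasDerivAt A a' ((starRingEnd ℂ) z₀)) (hB : HasDerivAt B b' ((starRingEnd ℂ) z₀))
    (hR : HasDerivAt R r z₀)
    (heq : ∀ᶠ z in nhds z₀, z * A ((starRingEnd ℂ) z) + B ((starRingEnd ℂ) z) = R z) :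
    z₀ * a' + b' = 0 ∧ A ((starRingEnd ℂ) z₀) = r := by
  have hconj : HasFDerivAt (fun z : ℂ => (starRingEnd ℂ) z)
      (Complex.conjCLE : ℂ →L[ℝ] ℂ) z₀ := by
    have h0 := Complex.conjCLE.hasFDerivAt (x := z₀)
    apply h0.congr_of_eventuallyEq
    apply Filter.Eventually.of_forall
    intro z
    exact (Complex.conjCLE_apply z).symm
  have hAc : HasFDerivAt (fun z => A ((starRingEnd ℂ) z))
      (((ContinuousLinearMap.smulRight (1:ℂ →L[ℂ] ℂ) a').restrictScalars ℝ).comp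
        (Complex.conjCLE : ℂ →L[ℝ] ℂ)) z₀ :=
    (hA.hasFDerivAt.restrictScalars ℝ).comp z₀ hconj
  have hBc : HasFDerivAt (fun z => B ((starRingEnd ℂ) z))
      (((ContinuousLinearMap.smulRight (1:ℂ →L[ℂ] ℂ) b').restrictScalars ℝ).comp
        (Complex.conjCLE : ℂ →L[ℝ] ℂ)) z₀ :=
    (hB.hasFDerivAt.restrictScalars ℝ).comp z₀ hconj
  have hid : HasFDerivAt (fun z : ℂ => z) (ContinuousLinearMap.id ℝ ℂ) z₀ := hasFDerivAt_id z₀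
  have hmul := hid.mul hAc
  have hsum := hmul.add hBc
  have hRF : HasFDerivAt (fun z => z * A ((starRingEnd ℂ) z) + B ((starRingEnd ℂ) z))
      ((ContinuousLinearMap.smulRight (1:ℂ →L[ℂ] ℂ) r).restrictScalars ℝ) z₀ := by
    apply (hR.hasFDerivAt.restrictScalars ℝ).congr_of_eventuallyEq
    exact heq
  have huniq := hsum.unique hRF
  have e1 := congrArg (fun L : ℂ →L[ℝ] ℂ => L 1) huniq
  have e2 := congrArg (fun L : ℂ →L[ℝ] ℂ => L I) huniq
  simp only [ContinuousLinearMap.add_apply, ContinuousLinearMap.smul_apply,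
    ContinuousLinearMap.comp_apply, ContinuousLinearMap.coe_restrictScalars',
    ContinuousLinearMap.smulRight_apply, ContinuousLinearMap.one_apply,
    ContinuousLinearMap.id_apply, ContinuousLinearEquiv.coe_coe, Complex.conjCLE_apply,
    map_one, Complex.conj_I, smul_eq_mul] at e1 e2
  constructor
  · have hA2 : A ((starRingEnd ℂ) z₀) = r := by
      apply mul_left_cancel₀ two_I_ne
      linear_combination I * e1 + e2
    linear_combination e1 - hA2
  · apply mul_left_cancel₀ two_I_ne
    linear_combination I * e1 + e2

end RudinAux6

namespace RudinAux7
open RudinAux RudinAux2 RudinAux3 RudinAux4 RudinAux5 RudinAux6 MeasureTheory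

lemma deriv_diffOn {f : ℂ → ℂ} (hf : DifferentiableOn ℂ f (ball (0:ℂ) 1)) :
    DifferentiableOn ℂ (deriv f) (ball (0:ℂ) 1) :=
  ((hf.analyticOnNhd isOpen_ball).deriv).differentiableOn

lemma conj_mem_ball {z : ℂ} (hz : z ∈ ball (0:ℂ) 1) : (starRingEnd ℂ) z ∈ ball (0:ℂ) 1 := by
  rw [mem_ball_zero_iff] at hz ⊢
  rwa [RCLike.norm_conj]

lemma norm_exp_inv (θ : ℝ) : ‖(Complex.exp (θ*I))⁻¹‖ = 1 := by
  rw [norm_inv, norm_exp_eq]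
  norm_num

lemma cont_exp_inv : Continuous fun θ : ℝ => (Complex.exp (θ*I))⁻¹ :=
  contE.inv₀ exp_ne_zero'

lemma split {q : ℝ → ℂ} (hq : Continuous q) {z : ℂ} (hz : ‖z‖ < 1) :
    (∫ θ in (0:ℝ)..(2*Real.pi), K z θ * q θ)
      = (∫ θ in (0:ℝ)..(2*Real.pi), (q θ * Complex.exp (θ*I)) * (Complex.exp (θ*I) - z)⁻¹)
        + (∫ θ in (0:ℝ)..(2*Real.pi), (q θ * (Complex.exp (θ*I))⁻¹)
            * ((Complex.exp (θ*I))⁻¹ - (starRingEnd ℂ) z)⁻¹)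
        - ∫ θ in (0:ℝ)..(2*Real.pi), q θ := by
  have hconjz : ‖(starRingEnd ℂ) z‖ < 1 := by rwa [RCLike.norm_conj]
  have i1 : IntervalIntegrable
      (fun θ => (q θ * Complex.exp (θ*I)) * (Complex.exp (θ*I) - z)⁻¹) volume 0 (2*Real.pi) :=
    Continuous.intervalIntegrable ((hq.mul contE).mul ((contE.sub continuous_const).inv₀
      (fun θ => sub_ne_zero_of_norm hz (norm_exp_eq θ)))) _ _
  have i2 : IntervalIntegrable
      (fun θ => (q θ * (Complex.exp (θ*I))⁻¹)
        * ((Complex.exp (θ*I))⁻¹ - (starRingEnd ℂ) z)⁻¹) volume 0 (2*Real.pi) :=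
    Continuous.intervalIntegrable ((hq.mul cont_exp_inv).mul ((cont_exp_inv.sub continuous_const).inv₀
      (fun θ => sub_ne_zero_of_norm hconjz (norm_exp_inv θ)))) _ _
  have i3 : IntervalIntegrable q volume 0 (2*Real.pi) := hq.intervalIntegrable _ _
  rw [← intervalIntegral.integral_add i1 i2, ← intervalIntegral.integral_sub (i1.add i2) i3]
  apply intervalIntegral.integral_congr
  intro θ _
  dsimp only
  have hζ0 : Complex.exp (θ*I) ≠ 0 := exp_ne_zero' θ
  have h5 : ((1:ℂ) - (starRingEnd ℂ) z * Complex.exp (θ*I))⁻¹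
      = (Complex.exp (θ*I))⁻¹ * ((Complex.exp (θ*I))⁻¹ - (starRingEnd ℂ) z)⁻¹ := by
    rw [← mul_inv]
    congr 1
    rw [mul_sub, mul_inv_cancel₀ hζ0]
    ring
  show K z θ * q θ = _
  unfold K
  rw [h5]
  ring

end RudinAux7

open RudinAux RudinAux2 RudinAux3 RudinAux4 RudinAux5 RudinAux6 RudinAux7 MeasureTheory

/-- Module formulation of Rudin's theorem: if `φ ∈ C(𝔻̄)` and every `a + bφ` with
`a, b ∈ A(𝔻)` satisfies the weak maximum principle, then `φ ∈ A(𝔻)`. -/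
theorem module_max_principle (φ : ℂ → ℂ)
    (hφ : ContinuousOn φ (closedBall (0:ℂ) 1))
    (h : ∀ a ∈ diskAlgebra, ∀ b ∈ diskAlgebra, ∀ z ∈ ball (0:ℂ) 1,
      ‖a z + b z * φ z‖ ≤ circleSup (fun ζ => a ζ + b ζ * φ ζ)) :
    φ ∈ diskAlgebra := by
  refine ⟨hφ, ?_⟩
  -- scalar hypotheses
  have hyp0 : ∀ a ∈ diskAlgebra, ∀ c : ℂ, ∀ w ∈ ball (0:ℂ) 1,
      ‖a w + c * φ w‖ ≤ circleSup (fun ζ => a ζ + c * φ ζ) := by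
    intro a ha c w hw
    simpa using h a ha (fun _ => c) (da_const c) w hw
  have hφ₁ : ContinuousOn (fun w : ℂ => w * φ w) (closedBall (0:ℂ) 1) :=
    continuousOn_id.mul hφ
  have hyp1 : ∀ a ∈ diskAlgebra, ∀ c : ℂ, ∀ w ∈ ball (0:ℂ) 1,
      ‖a w + c * (w * φ w)‖ ≤ circleSup (fun ζ => a ζ + c * (ζ * φ ζ)) := by
    intro a ha c w hw
    have h2 := h a ha (fun u => c * u) (da_linear c) w hw
    have he : (fun ζ : ℂ => a ζ + (fun u : ℂ => c * u) ζ * φ ζ)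
        = (fun ζ => a ζ + c * (ζ * φ ζ)) := by
      funext ζ
      dsimp only
      ring
    rw [he] at h2
    have he2 : a w + c * (w * φ w) = a w + (fun u : ℂ => c * u) w * φ w := by
      dsimp only
      ring
    rw [he2]
    exact h2
  -- boundary data
  set q0 : ℝ → ℂ := fun θ => φ (Complex.exp (θ*I)) with hq0def
  have hq0c : Continuous q0 := cont_comp_exp hφ
  set q1 : ℝ → ℂ := fun θ => Complex.exp (θ*I) * φ (Complex.exp (θ*I)) with hq1def
  have hq1c : Continuous q1 := contE.mul hq0c
  set A0 : ℂ → ℂ := fun z => ∫ θ in (0:ℝ)..(2*Real.pi),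
      (q0 θ * Complex.exp (θ*I)) * (Complex.exp (θ*I) - z)⁻¹ with hA0def
  set A1 : ℂ → ℂ := fun z => ∫ θ in (0:ℝ)..(2*Real.pi),
      (q1 θ * Complex.exp (θ*I)) * (Complex.exp (θ*I) - z)⁻¹ with hA1def
  set C0 : ℂ → ℂ := fun w => ∫ θ in (0:ℝ)..(2*Real.pi),
      (q0 θ * (Complex.exp (θ*I))⁻¹) * ((Complex.exp (θ*I))⁻¹ - w)⁻¹ with hC0def
  set C1 : ℂ → ℂ := fun w => ∫ θ in (0:ℝ)..(2*Real.pi),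
      (q1 θ * (Complex.exp (θ*I))⁻¹) * ((Complex.exp (θ*I))⁻¹ - w)⁻¹ with hC1def
  set c0 : ℂ := ∫ θ in (0:ℝ)..(2*Real.pi), q0 θ with hc0def
  set c1 : ℂ := ∫ θ in (0:ℝ)..(2*Real.pi), q1 θ with hc1def
  have hA0d : DifferentiableOn ℂ A0 (ball (0:ℂ) 1) :=
    diff_param (hq0c.mul contE) contE norm_exp_eq
  have hA1d : DifferentiableOn ℂ A1 (ball (0:ℂ) 1) :=
    diff_param (hq1c.mul contE) contE norm_exp_eq
  have hC0d : DifferentiableOn ℂ C0 (ball (0:ℂ) 1) :=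
    diff_param (hq0c.mul cont_exp_inv) cont_exp_inv norm_exp_inv
  have hC1d : DifferentiableOn ℂ C1 (ball (0:ℂ) 1) :=
    diff_param (hq1c.mul cont_exp_inv) cont_exp_inv norm_exp_inv
  -- representation identities
  have idz : ∀ z ∈ ball (0:ℂ) 1,
      ((2*Real.pi:ℝ):ℂ) * φ z = A0 z + C0 ((starRingEnd ℂ) z) - c0 := by
    intro z hz
    have hp := poisson_rep φ hφ hyp0 hz
    rw [hp]
    exact split hq0c (mem_ball_zero_iff.mp hz)
  have idz1 : ∀ z ∈ ball (0:ℂ) 1,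
      ((2*Real.pi:ℝ):ℂ) * (z * φ z) = A1 z + C1 ((starRingEnd ℂ) z) - c1 := by
    intro z hz
    have hp := poisson_rep (fun w => w * φ w) hφ₁ hyp1 hz
    rw [hp]
    exact split hq1c (mem_ball_zero_iff.mp hz)
  set R : ℂ → ℂ := fun z => A1 z - z * A0 z + z * c0 - c1 with hRdef
  have hRd : DifferentiableOn ℂ R (ball (0:ℂ) 1) :=
    (((hA1d.sub ((differentiable_id.differentiableOn).mul hA0d)).add
      ((differentiable_id.differentiableOn).mul (differentiableOn_const _))).sub
      (differentiableOn_const _))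
  have hmain : ∀ z ∈ ball (0:ℂ) 1,
      z * C0 ((starRingEnd ℂ) z) + (-(C1 ((starRingEnd ℂ) z))) = R z := by
    intro z hz
    have h1 := idz z hz
    have h2 := idz1 z hz
    rw [hRdef]
    dsimp only
    linear_combination h2 - z * h1
  have hC0' : ∀ w ∈ ball (0:ℂ) 1, HasDerivAt C0 (deriv C0 w) w := fun w hw =>
    (hC0d.differentiableAt (isOpen_ball.mem_nhds hw)).hasDerivAt
  have hC1' : ∀ w ∈ ball (0:ℂ) 1, HasDerivAt C1 (deriv C1 w) w := fun w hw =>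
    (hC1d.differentiableAt (isOpen_ball.mem_nhds hw)).hasDerivAt
  have hC0'' : ∀ w ∈ ball (0:ℂ) 1, HasDerivAt (deriv C0) (deriv (deriv C0) w) w := fun w hw =>
    ((deriv_diffOn hC0d).differentiableAt (isOpen_ball.mem_nhds hw)).hasDerivAt
  have hC1'' : ∀ w ∈ ball (0:ℂ) 1, HasDerivAt (deriv C1) (deriv (deriv C1) w) w := fun w hw =>
    ((deriv_diffOn hC1d).differentiableAt (isOpen_ball.mem_nhds hw)).hasDerivAt
  -- first Wirtinger step
  have step1 : ∀ w ∈ ball (0:ℂ) 1,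
      (starRingEnd ℂ) w * deriv C0 w + (-(deriv C1 w)) = 0 := by
    intro w hw
    have hwz : (starRingEnd ℂ) ((starRingEnd ℂ) w) = w := Complex.conj_conj w
    have hz₀b : (starRingEnd ℂ) w ∈ ball (0:ℂ) 1 := conj_mem_ball hw
    have hA : HasDerivAt C0 (deriv C0 w) ((starRingEnd ℂ) ((starRingEnd ℂ) w)) := by
      rw [hwz]; exact hC0' w hw
    have hB : HasDerivAt (fun u => -(C1 u)) (-(deriv C1 w))
        ((starRingEnd ℂ) ((starRingEnd ℂ) w)) := by
      rw [hwz]; exact (hC1' w hw).neg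
    have hRz : HasDerivAt R (deriv R ((starRingEnd ℂ) w)) ((starRingEnd ℂ) w) :=
      (hRd.differentiableAt (isOpen_ball.mem_nhds hz₀b)).hasDerivAt
    have heq : ∀ᶠ z in nhds ((starRingEnd ℂ) w),
        z * C0 ((starRingEnd ℂ) z) + (-(C1 ((starRingEnd ℂ) z))) = R z :=
      (isOpen_ball.eventually_mem hz₀b).mono (fun z hz => hmain z hz)
    exact (wirt hA hB hRz heq).1
  -- second Wirtinger step
  have step2 : ∀ w ∈ ball (0:ℂ) 1, deriv C0 w = 0 := by
    intro w hw
    have hwz : (starRingEnd ℂ) ((starRingEnd ℂ) w) = w := Complex.conj_conj w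
    have hz₀b : (starRingEnd ℂ) w ∈ ball (0:ℂ) 1 := conj_mem_ball hw
    have hA : HasDerivAt (deriv C0) (deriv (deriv C0) w) ((starRingEnd ℂ) ((starRingEnd ℂ) w)) := by
      rw [hwz]; exact hC0'' w hw
    have hB : HasDerivAt (fun u => -(deriv C1 u)) (-(deriv (deriv C1) w))
        ((starRingEnd ℂ) ((starRingEnd ℂ) w)) := by
      rw [hwz]; exact (hC1'' w hw).neg
    have hRz : HasDerivAt (fun _ : ℂ => (0:ℂ)) 0 ((starRingEnd ℂ) w) := hasDerivAt_const _ _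
    have heq : ∀ᶠ z in nhds ((starRingEnd ℂ) w),
        z * deriv C0 ((starRingEnd ℂ) z) + (-(deriv C1 ((starRingEnd ℂ) z))) = 0 := by
      apply (isOpen_ball.eventually_mem hz₀b).mono
      intro z hz
      have := step1 ((starRingEnd ℂ) z) (conj_mem_ball hz)
      rwa [Complex.conj_conj] at this
    have hres := (wirt hA hB hRz heq).2
    rwa [hwz] at hres
  -- C0 is constant on the ball
  have hconst : ∀ w ∈ ball (0:ℂ) 1, C0 w = C0 0 := by
    intro w hw
    apply (convex_ball (0:ℂ) 1).is_const_of_fderivWithin_eq_zero hC0d ?_ hw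
      (mem_ball_self one_pos)
    intro x hx
    rw [fderivWithin_of_isOpen isOpen_ball hx, ← toSpanSingleton_deriv, step2 x hx]
    ext
    simp
  -- conclude
  have hfinal : DifferentiableOn ℂ
      (fun z => (((2*Real.pi:ℝ):ℂ))⁻¹ * (A0 z + C0 0 - c0)) (ball (0:ℂ) 1) :=
    (differentiableOn_const _).mul ((hA0d.add (differentiableOn_const _)).sub
      (differentiableOn_const _))
  apply hfinal.congr
  intro z hz
  have h1 := idz z hz
  rw [hconst _ (conj_mem_ball hz)] at h1
  rw [← h1, inv_mul_cancel_left₀ two_pi_ne]
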